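/- Let ε : ℝ → (ZMod n → ℝ) be differentiable with ε'(t) = −(M *ᵥ ε(t)) for every t. Then the system reaches consensus at the average of the initial values: for every index i, εᵢ(t) tends to (1/n)·∑ⱼ εⱼ(0) as t → ∞. -/

import Mathlib

open Matrix Filter

set_option linter.unusedSectionVars false

/-- The weighted cycle Laplacian matrix of the encirclement algorithm:
`M i i = k i + k (i+1)`, `M i (i-1) = -k i`, `M i (i+1) = -k (i+1)`, and `0` otherwise. -/
def cycLap (n : ℕ) (k : ZMod n → ℝ) : Matrix (ZMod n) (ZMod n) ℝ :=
  Matrix.of fun i j =>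
    if j = i then k i + k (i + 1)
    else if j = i - 1 then -k i
    else if j = i + 1 then -k (i + 1)
    else 0

section Aux
variable {n : ℕ} [NeZero n]

lemma zmod_two_ne_zero (hn : 3 ≤ n) : (2 : ZMod n) ≠ 0 := by
  have : ((2:ℕ) : ZMod n) ≠ 0 := by
    rw [Ne, ZMod.natCast_eq_zero_iff]
    intro h; have := Nat.le_of_dvd (by norm_num) h; omega
  simpa using this

lemma zmod_one_ne_zero (hn : 3 ≤ n) : (1 : ZMod n) ≠ 0 := by
  have : ((1:ℕ) : ZMod n) ≠ 0 := by
    rw [Ne, ZMod.natCast_eq_zero_iff]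
    intro h; have := Nat.le_of_dvd (by norm_num) h; omega
  simpa using this

lemma cycLap_row (hn : 3 ≤ n) (k : ZMod n → ℝ) (i : ZMod n) :
    (fun j => cycLap n k i j) = fun j =>
      (if j = i then k i + k (i+1) else 0) + (if j = i - 1 then -k i else 0)
        + (if j = i + 1 then -k (i+1) else 0) := by
  have h1 : (i : ZMod n) - 1 ≠ i := by
    intro h; apply zmod_one_ne_zero hn; linear_combination i - h
  have h2 : (i : ZMod n) + 1 ≠ i := by
    intro h; apply zmod_one_ne_zero hn; linear_combination h - i
  have h3 : (i : ZMod n) + 1 ≠ i - 1 := by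
    intro h; apply zmod_two_ne_zero hn; linear_combination h - i + 1
  funext j
  simp only [cycLap, Matrix.of_apply]
  split_ifs with ha hb hc <;> simp_all

lemma cycLap_mulVec (hn : 3 ≤ n) (k : ZMod n → ℝ) (x : ZMod n → ℝ) (i : ZMod n) :
    (cycLap n k *ᵥ x) i = (k i + k (i+1)) * x i - k i * x (i-1) - k (i+1) * x (i+1) := by
  have := cycLap_row hn k i
  simp only [Matrix.mulVec, dotProduct]
  calc ∑ j, cycLap n k i j * x j
      = ∑ j, ((if j = i then k i + k (i+1) else 0) + (if j = i - 1 then -k i else 0)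
        + (if j = i + 1 then -k (i+1) else 0)) * x j := by
        refine Finset.sum_congr rfl fun j _ => ?_
        rw [show cycLap n k i j = _ from congrFun this j]
    _ = (k i + k (i+1)) * x i - k i * x (i-1) - k (i+1) * x (i+1) := by
        simp [add_mul, Finset.sum_add_distrib, Finset.sum_ite_eq', ite_mul]
        ring

lemma zmod_shift_sum (F : ZMod n → ℝ) : ∑ i, F (i+1) = ∑ i, F i :=
  Fintype.sum_equiv (Equiv.addRight 1) _ _ (fun _ => rfl)

lemma zmod_const (x : ZMod n → ℝ) (h : ∀ i, x (i+1) = x i) (j : ZMod n) : x j = x 0 := by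
  have key : ∀ m : ℕ, x (m : ZMod n) = x 0 := by
    intro m; induction m with
    | zero => simp
    | succ m ih => rw [Nat.cast_succ, h, ih]
  rw [← key j.val, ZMod.natCast_val, ZMod.cast_id]

lemma sum_cycLap_mulVec (hn : 3 ≤ n) (k : ZMod n → ℝ) (x : ZMod n → ℝ) :
    ∑ i, (cycLap n k *ᵥ x) i = 0 := by
  have h1 : ∑ i, k (i+1) * x ((i+1)-1) = ∑ i, k i * x (i-1) :=
    zmod_shift_sum (fun i => k i * x (i-1))
  simp only [add_sub_cancel_right] at h1
  have h2 : ∑ i, k (i+1) * x (i+1) = ∑ i, k i * x i :=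
    zmod_shift_sum (fun i => k i * x i)
  calc ∑ i, (cycLap n k *ᵥ x) i
      = ∑ i, ((k i + k (i+1)) * x i - k i * x (i-1) - k (i+1) * x (i+1)) :=
        Finset.sum_congr rfl fun i _ => cycLap_mulVec hn k x i
    _ = (∑ i, k i * x i + ∑ i, k (i+1) * x i) - ∑ i, k i * x (i-1) - ∑ i, k (i+1) * x (i+1) := by
        simp [Finset.sum_sub_distrib, Finset.sum_add_distrib, add_mul]
    _ = 0 := by rw [← h1, h2]; ring

/-- The Dirichlet energy / quadratic form of the cycle Laplacian. -/
noncomputable def cycR (n : ℕ) [NeZero n] (k : ZMod n → ℝ) (x : ZMod n → ℝ) : ℝ :=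
  ∑ i, k (i+1) * (x i - x (i+1))^2

lemma cycR_nonneg (k : ZMod n → ℝ) (hk : ∀ i, 0 < k i) (x : ZMod n → ℝ) : 0 ≤ cycR n k x :=
  Finset.sum_nonneg fun _ _ => mul_nonneg (hk _).le (sq_nonneg _)

lemma quadform_cycLap (hn : 3 ≤ n) (k : ZMod n → ℝ) (x : ZMod n → ℝ) :
    ∑ i, x i * (cycLap n k *ᵥ x) i = cycR n k x := by
  have h1 : ∑ i, k (i+1) * x (i+1)^2 = ∑ i, k i * x i^2 :=
    zmod_shift_sum (fun i => k i * x i ^ 2)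
  have h2 : ∑ i, k (i+1) * (x ((i+1)-1) * x (i+1)) = ∑ i, k i * (x (i-1) * x i) :=
    zmod_shift_sum (fun i => k i * (x (i-1) * x i))
  simp only [add_sub_cancel_right] at h2
  calc ∑ i, x i * (cycLap n k *ᵥ x) i
      = ∑ i, (k i * x i^2 + k (i+1) * x i^2 - k i * (x (i-1) * x i) - k (i+1) * (x i * x (i+1))) := by
        refine Finset.sum_congr rfl fun i _ => ?_
        rw [cycLap_mulVec hn k x i]; ring
    _ = (∑ i, k i * x i^2 + ∑ i, k (i+1) * x i^2) - ∑ i, k i * (x (i-1) * x i)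
          - ∑ i, k (i+1) * (x i * x (i+1)) := by
        simp [Finset.sum_sub_distrib, Finset.sum_add_distrib]
    _ = cycR n k x := by
        unfold cycR
        rw [← h2, ← h1]
        have : ∀ i : ZMod n, k (i+1) * (x i - x (i+1))^2
            = k (i+1) * x (i+1)^2 + k (i+1) * x i^2 - k (i+1) * (x i * x (i+1))
              - k (i+1) * (x i * x (i+1)) := fun i => by ring
        simp only [this, Finset.sum_sub_distrib, Finset.sum_add_distrib]

lemma exists_gap (hn : 3 ≤ n) (k : ZMod n → ℝ) (hk : ∀ i, 0 < k i) :
    ∃ lam : ℝ, 0 < lam ∧ ∀ x : ZMod n → ℝ, (∑ i, x i = 0) →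
      lam * ∑ i, (x i)^2 ≤ cycR n k x := by
  set S : Set (ZMod n → ℝ) := {x | ∑ i, x i = 0 ∧ ∑ i, (x i)^2 = 1} with hS
  have hcont1 : Continuous fun x : ZMod n → ℝ => ∑ i, x i :=
    continuous_finset_sum _ fun i _ => continuous_apply i
  have hcont2 : Continuous fun x : ZMod n → ℝ => ∑ i, (x i)^2 :=
    continuous_finset_sum _ fun i _ => (continuous_apply i).pow 2
  have hcontR : Continuous (cycR n k) :=
    continuous_finset_sum _ fun i _ =>
      continuous_const.mul (((continuous_apply i).sub (continuous_apply (i+1))).pow 2)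
  have hclosed : IsClosed S := by
    have : S = (fun x : ZMod n → ℝ => ∑ i, x i) ⁻¹' {0} ∩
        (fun x : ZMod n → ℝ => ∑ i, (x i)^2) ⁻¹' {1} := by
      ext x; simp [hS]
    rw [this]
    exact (isClosed_singleton.preimage hcont1).inter (isClosed_singleton.preimage hcont2)
  have hbdd : Bornology.IsBounded S := by
    rw [Metric.isBounded_iff_subset_closedBall 0]
    refine ⟨1, fun x hx => ?_⟩
    rw [Metric.mem_closedBall, dist_zero_right]
    rw [pi_norm_le_iff_of_nonneg (by norm_num)]
    intro i
    rw [Real.norm_eq_abs, abs_le]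
    have h1 : (x i)^2 ≤ 1 := by
      rw [← hx.2]
      exact Finset.single_le_sum (fun j _ => sq_nonneg (x j)) (Finset.mem_univ i)
    constructor <;> nlinarith
  have hcompact : IsCompact S := Metric.isCompact_of_isClosed_isBounded hclosed hbdd
  have hne : S.Nonempty := by
    refine ⟨fun j => if j = 0 then Real.sqrt 2 / 2 else if j = 1 then -(Real.sqrt 2 / 2) else 0, ?_, ?_⟩
    · have h01 : (1 : ZMod n) ≠ 0 := zmod_one_ne_zero hn
      rw [show (fun j : ZMod n => if j = 0 then Real.sqrt 2 / 2 else if j = 1 then -(Real.sqrt 2 / 2) else 0)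
        = fun j => (if j = 0 then Real.sqrt 2 / 2 else 0) + (if j = 1 then -(Real.sqrt 2 / 2) else 0) from
        funext fun j => by split_ifs with h h2 <;> simp_all]
      simp [Finset.sum_add_distrib, Finset.sum_ite_eq']
    · have h01 : (1 : ZMod n) ≠ 0 := zmod_one_ne_zero hn
      have h2 : (Real.sqrt 2 / 2)^2 = 1/2 := by
        rw [div_pow, Real.sq_sqrt (by norm_num : (0:ℝ) ≤ 2)]; norm_num
      rw [show (fun j : ZMod n => ((if j = 0 then Real.sqrt 2 / 2 else if j = 1 then -(Real.sqrt 2 / 2) else 0))^2)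
        = fun j => (if j = 0 then (1:ℝ)/2 else 0) + (if j = 1 then (1:ℝ)/2 else 0) from
        funext fun j => by split_ifs with h h2' <;> simp_all <;> nlinarith [h2]]
      rw [Finset.sum_add_distrib]
      simp [Finset.sum_ite_eq']
      norm_num
  obtain ⟨x₀, hx₀S, hmin⟩ := hcompact.exists_isMinOn hne hcontR.continuousOn
  refine ⟨cycR n k x₀, ?_, ?_⟩
  · rcases lt_or_eq_of_le (cycR_nonneg k hk x₀) with h | h
    · exact h
    · exfalso
      have hall : ∀ i, x₀ (i+1) = x₀ i := by
        intro i
        have hterm : k (i+1) * (x₀ i - x₀ (i+1))^2 = 0 := by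
          have h' : ∑ j, k (j+1) * (x₀ j - x₀ (j+1))^2 = 0 := h.symm
          have := Finset.sum_eq_zero_iff_of_nonneg
            (fun j (_ : j ∈ Finset.univ) => mul_nonneg (hk (j+1)).le (sq_nonneg (x₀ j - x₀ (j+1)))) |>.mp h'
          exact this i (Finset.mem_univ i)
        have := (mul_eq_zero.mp hterm).resolve_left (hk (i+1)).ne'
        nlinarith [sq_nonneg (x₀ i - x₀ (i+1))]
      have hconst : ∀ j, x₀ j = x₀ 0 := zmod_const x₀ hall
      have hsum := hx₀S.1
      have : (n : ℝ) * x₀ 0 = 0 := by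
        rw [← hsum]
        rw [Finset.sum_congr rfl fun j _ => hconst j]
        simp [Finset.card_univ, mul_comm]
      have hx0 : x₀ 0 = 0 := by
        have hn' : (n : ℝ) ≠ 0 := Nat.cast_ne_zero.mpr (NeZero.ne n)
        exact (mul_eq_zero.mp this).resolve_left hn'
      have : ∑ i, (x₀ i)^2 = 0 := by
        rw [Finset.sum_congr rfl fun j _ => by rw [hconst j, hx0]]; simp
      rw [hx₀S.2] at this; norm_num at this
  · intro x hx
    by_cases hx2 : ∑ i, (x i)^2 = 0
    · rw [hx2, mul_zero]; exact cycR_nonneg k hk x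
    · have hpos : 0 < ∑ i, (x i)^2 :=
        lt_of_le_of_ne (Finset.sum_nonneg fun i _ => sq_nonneg _) (Ne.symm hx2)
      set c : ℝ := Real.sqrt (∑ i, (x i)^2) with hc
      have hcpos : 0 < c := Real.sqrt_pos.mpr hpos
      have hc2 : c^2 = ∑ i, (x i)^2 := Real.sq_sqrt hpos.le
      have hu : (fun i => x i / c) ∈ S := by
        constructor
        · rw [← Finset.sum_div, hx, zero_div]
        · have : ∑ i, (x i / c)^2 = (∑ i, (x i)^2) / c^2 := by
            rw [Finset.sum_div]; exact Finset.sum_congr rfl fun i _ => by ring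
          rw [this, ← hc2, div_self (by positivity)]
      have hRu : cycR n k x₀ ≤ cycR n k (fun i => x i / c) := hmin hu
      have hRscale : cycR n k (fun i => x i / c) = cycR n k x / c^2 := by
        unfold cycR
        rw [Finset.sum_div]
        exact Finset.sum_congr rfl fun i _ => by field_simp
      rw [hRscale] at hRu
      rw [← hc2]
      rw [le_div_iff₀ (by positivity)] at hRu
      nlinarith

end Aux

/-- Any solution of `ε̇ = -Mε` reaches consensus at the average of the initial values:
each coordinate `ε i (t)` tends to `(1/n) ∑ j, ε j (0)` as `t → ∞`. -/
theorem coverage_angles_consensus (n : ℕ) (hn : 3 ≤ n) [NeZero n]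
    (k : ZMod n → ℝ) (hk : ∀ i, 0 < k i) (ε : ℝ → ZMod n → ℝ)
    (hε : ∀ t, HasDerivAt ε (-(cycLap n k *ᵥ ε t)) t) :
    ∀ i, Tendsto (fun t => ε t i) atTop (nhds ((∑ j, ε 0 j) / n)) := by
  have hnR : (0:ℝ) < n := by positivity
  -- coordinatewise derivative
  have hεi : ∀ t i, HasDerivAt (fun s => ε s i) (-(cycLap n k *ᵥ ε t) i) t :=
    fun t i => (hasDerivAt_pi.mp (hε t)) i
  -- the sum is conserved
  have hsumderiv : ∀ t, HasDerivAt (fun s => ∑ j, ε s j) 0 t := by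
    intro t
    have := HasDerivAt.fun_sum (fun j (_ : j ∈ Finset.univ) => hεi t j)
    have hz : ∑ j ∈ Finset.univ, (-(cycLap n k *ᵥ ε t) j) = 0 := by
      simp only [Pi.neg_apply, Finset.sum_neg_distrib]
      rw [sum_cycLap_mulVec hn k (ε t)]
      simp
    rwa [hz] at this
  have hsumconst : ∀ t, ∑ j, ε t j = ∑ j, ε 0 j := by
    intro t
    exact is_const_of_deriv_eq_zero (fun s => (hsumderiv s).differentiableAt)
      (fun s => (hsumderiv s).deriv) t 0
  set c : ℝ := (∑ j, ε 0 j) / n with hc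
  -- mean-zero shifted variable
  have hymean : ∀ t, ∑ i, (ε t i - c) = 0 := by
    intro t
    rw [Finset.sum_sub_distrib, hsumconst t]
    simp [hc, Finset.card_univ]
    field_simp
    ring
  -- M kills constants
  have hMy : ∀ t i, (cycLap n k *ᵥ (fun j => ε t j - c)) i = (cycLap n k *ᵥ ε t) i := by
    intro t i
    rw [cycLap_mulVec hn, cycLap_mulVec hn]
    ring
  -- the Lyapunov function
  set V : ℝ → ℝ := fun t => ∑ i, (ε t i - c)^2 with hV
  have hVnonneg : ∀ t, 0 ≤ V t := fun t => Finset.sum_nonneg fun i _ => sq_nonneg _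
  obtain ⟨lam, hlam, hgap⟩ := exists_gap hn k hk
  have hVderiv : ∀ t, HasDerivAt V (-2 * cycR n k (fun j => ε t j - c)) t := by
    intro t
    have hterm : ∀ i, HasDerivAt (fun s => (ε s i - c)^2)
        (2 * (ε t i - c) * (-(cycLap n k *ᵥ ε t) i)) t := by
      intro i
      have h1 : HasDerivAt (fun s => ε s i - c) (-(cycLap n k *ᵥ ε t) i) t :=
        (hεi t i).sub_const c
      have := h1.fun_pow 2
      simpa [mul_comm, mul_assoc, mul_left_comm] using this
    have hsum := HasDerivAt.fun_sum (fun i (_ : i ∈ Finset.univ) => hterm i)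
    have heq : ∑ i, 2 * (ε t i - c) * (-(cycLap n k *ᵥ ε t) i)
        = -2 * cycR n k (fun j => ε t j - c) := by
      rw [← quadform_cycLap hn k (fun j => ε t j - c)]
      rw [Finset.mul_sum]
      refine Finset.sum_congr rfl fun i _ => ?_
      rw [hMy t i]
      ring
    rwa [heq] at hsum
  -- decay of V
  have hVle : ∀ t, 0 ≤ t → V t ≤ V 0 * Real.exp (-(2*lam*t)) := by
    intro t ht
    set g : ℝ → ℝ := fun s => V s * Real.exp (2*lam*s) with hg
    have hgderiv : ∀ s, HasDerivAt g
        ((-2 * cycR n k (fun j => ε s j - c)) * Real.exp (2*lam*s)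
          + V s * (2*lam * Real.exp (2*lam*s))) s := by
      intro s
      have hexp : HasDerivAt (fun u : ℝ => Real.exp (2*lam*u)) (2*lam * Real.exp (2*lam*s)) s := by
        have h1 : HasDerivAt (fun u : ℝ => 2*lam*u) (2*lam) s := by
          simpa using (hasDerivAt_id s).const_mul (2*lam)
        have := h1.exp
        simpa [mul_comm] using this
      exact (hVderiv s).mul hexp
    have hgnonpos : ∀ s, deriv g s ≤ 0 := by
      intro s
      rw [(hgderiv s).deriv]
      have h1 : lam * V s ≤ cycR n k (fun j => ε s j - c) := hgap _ (hymean s)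
      have h2 : 0 < Real.exp (2*lam*s) := Real.exp_pos _
      nlinarith
    have hanti : Antitone g :=
      antitone_of_deriv_nonpos (fun s => (hgderiv s).differentiableAt) hgnonpos
    have this : V t * Real.exp (2*lam*t) ≤ V 0 * Real.exp (2*lam*0) := hanti ht
    rw [mul_zero, Real.exp_zero, mul_one] at this
    calc V t = V t * Real.exp (2*lam*t) * Real.exp (-(2*lam*t)) := by
          rw [mul_assoc, ← Real.exp_add]; simp
      _ ≤ V 0 * Real.exp (-(2*lam*t)) := by
          apply mul_le_mul_of_nonneg_right this (Real.exp_pos _).le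
  -- V tends to 0
  have hexp0 : Tendsto (fun t : ℝ => Real.exp (-(2*lam*t))) atTop (nhds 0) := by
    have h1 : Tendsto (fun t : ℝ => 2*lam*t) atTop atTop :=
      Tendsto.const_mul_atTop (by positivity) tendsto_id
    exact Real.tendsto_exp_atBot.comp (tendsto_neg_atBot_iff.mpr h1)
  have hV0 : Tendsto V atTop (nhds 0) := by
    have hupper : Tendsto (fun t => V 0 * Real.exp (-(2*lam*t))) atTop (nhds 0) := by
      simpa using hexp0.const_mul (V 0)
    refine tendsto_of_tendsto_of_tendsto_of_le_of_le' tendsto_const_nhds hupper ?_ ?_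
    · exact Eventually.of_forall fun t => hVnonneg t
    · exact eventually_atTop.mpr ⟨0, fun t ht => hVle t ht⟩
  -- coordinatewise convergence
  intro i
  have hsq : Tendsto (fun t => (ε t i - c)^2) atTop (nhds 0) := by
    refine tendsto_of_tendsto_of_tendsto_of_le_of_le' tendsto_const_nhds hV0 ?_ ?_
    · exact Eventually.of_forall fun t => sq_nonneg _
    · exact Eventually.of_forall fun t =>
        Finset.single_le_sum (fun j (_ : j ∈ Finset.univ) => sq_nonneg (ε t j - c)) (Finset.mem_univ i)
  have habs : Tendsto (fun t => |ε t i - c|) atTop (nhds 0) := by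
    have hsqrt : Tendsto (fun t => Real.sqrt ((ε t i - c)^2)) atTop (nhds (Real.sqrt 0)) :=
      (Real.continuous_sqrt.tendsto 0).comp hsq
    simpa [Real.sqrt_sq_eq_abs] using hsqrt
  have hdiff : Tendsto (fun t => ε t i - c) atTop (nhds 0) := by
    exact (tendsto_zero_iff_abs_tendsto_zero (fun t => ε t i - c)).mpr habs
  have := hdiff.add_const c
  simpa [hc] using this
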